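/- arXiv:1105.5755 — 3 statements merged into one kernel-verified Lean document; each statement's English description precedes it below -/
import Mathlib

section
/- For a memoryless communication system with zero lookahead (d = 0): the infimum over all sequences of causal encoder maps f_{e,i} : 𝒰^i × 𝒴^{i−1} → 𝒳 and decoder maps f_{d,i} : 𝒴^i → 𝒰̂ of the limsup expected average distortion (1/N)Σ_{i=1}^N E[Λ(U_i, Û_i)] equals D_symbol := min over single-letter maps X : 𝒰 → 𝒳 and Û : 𝒴 → 𝒰̂ of E[Λ(U, Û(Y))], where Y is the channel output for input X(U). -/
open Filter

set_option linter.unusedSectionVars false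
set_option maxHeartbeats 1000000

/-- Extend a finite sequence to an infinite one (arbitrary values beyond the horizon). -/
noncomputable def extSeq {α : Type*} [Nonempty α] {n : ℕ} (u : Fin n → α) : ℕ → α :=
  fun j => if h : j < n then u ⟨j, h⟩ else Classical.arbitrary α

lemma extSeq_of_lt {α : Type*} [Nonempty α] {n : ℕ} (u : Fin n → α) {j : ℕ} (h : j < n) :
    extSeq u j = u ⟨j, h⟩ := dif_pos h

lemma extSeq_snoc_of_lt {α : Type*} [Nonempty α] {n : ℕ} (u : Fin n → α) (a : α) {j : ℕ}
    (h : j < n) : extSeq (Fin.snoc u a : Fin (n+1) → α) j = extSeq u j := by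
  rw [extSeq_of_lt _ (h.trans (Nat.lt_succ_self n)), extSeq_of_lt _ h]
  exact Fin.snoc_castSucc (α := fun _ => α) a u ⟨j, h⟩

lemma extSeq_snoc_last {α : Type*} [Nonempty α] {n : ℕ} (u : Fin n → α) (a : α) :
    extSeq (Fin.snoc u a : Fin (n+1) → α) n = a := by
  rw [extSeq_of_lt _ (Nat.lt_succ_self n)]
  exact Fin.snoc_last (α := fun _ => α) a u

lemma sum_snoc_pair {α β : Type*} [Fintype α] [AddCommMonoid β] {n : ℕ}
    (g : (Fin (n+1) → α) → β) :
    ∑ f : Fin (n+1) → α, g f = ∑ p : (Fin n → α) × α, g (Fin.snoc p.1 p.2) := by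
  exact (Equiv.sum_comp ⟨fun p : (Fin n → α) × α => Fin.snoc p.1 p.2,
    fun f => (Fin.init f, f (Fin.last n)), fun p => by simp, fun f => by simp⟩ g).symm

section main
variable {U Xc Yc Uh : Type*}
    [Fintype U] [Nonempty U] [DecidableEq U]
    [Fintype Xc] [Nonempty Xc]
    [Fintype Yc] [Nonempty Yc] [DecidableEq Yc]
    [Fintype Uh] [Nonempty Uh]
    (PU : U → ℝ) (chan : Yc → Xc → ℝ) (Λ : U → Uh → ℝ)

lemma sum_split
    (enc : ℕ → (ℕ → U) → (ℕ → Yc) → Xc)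
    (henc : ∀ (i : ℕ) (u u' : ℕ → U) (y y' : ℕ → Yc),
        (∀ j ≤ i, u j = u' j) → (∀ j < i, y j = y' j) → enc i u y = enc i u' y')
    (N : ℕ) (G : (Fin (N+1) → U) → (Fin (N+1) → Yc) → ℝ) :
    ∑ u : Fin (N+1) → U, ∑ y : Fin (N+1) → Yc,
      ((∏ i, PU (u i)) * ∏ i, chan (y i) (enc i (extSeq u) (extSeq y))) * G u y
    = ∑ u' : Fin N → U, ∑ y' : Fin N → Yc,
        ((∏ i, PU (u' i)) * ∏ i, chan (y' i) (enc i (extSeq u') (extSeq y'))) *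
        ∑ a, ∑ b, PU a * chan b (enc N (extSeq (Fin.snoc u' a)) (extSeq y')) *
          G (Fin.snoc u' a) (Fin.snoc y' b) := by
  have hpoint : ∀ (u' : Fin N → U) (a : U) (y' : Fin N → Yc) (b : Yc),
      ((∏ i : Fin (N+1), PU ((Fin.snoc u' a : Fin (N+1) → U) i)) *
        ∏ i : Fin (N+1), chan ((Fin.snoc y' b : Fin (N+1) → Yc) i)
          (enc i (extSeq (Fin.snoc u' a)) (extSeq (Fin.snoc y' b)))) *
        G (Fin.snoc u' a) (Fin.snoc y' b)
      = ((∏ i, PU (u' i)) * ∏ i, chan (y' i) (enc i (extSeq u') (extSeq y'))) *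
        (PU a * chan b (enc N (extSeq (Fin.snoc u' a)) (extSeq y')) *
          G (Fin.snoc u' a) (Fin.snoc y' b)) := by
    intro u' a y' b
    have henclt : ∀ (i : Fin N),
        enc i (extSeq (Fin.snoc u' a)) (extSeq (Fin.snoc y' b))
          = enc i (extSeq u') (extSeq y') := by
      intro i
      apply henc
      · intro j hj; exact extSeq_snoc_of_lt _ _ (lt_of_le_of_lt hj i.isLt)
      · intro j hj; exact extSeq_snoc_of_lt _ _ (hj.trans i.isLt)
    have hencN : enc N (extSeq (Fin.snoc u' a)) (extSeq (Fin.snoc y' b))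
        = enc N (extSeq (Fin.snoc u' a)) (extSeq y') := by
      apply henc
      · intro j _; rfl
      · intro j hj; exact extSeq_snoc_of_lt _ _ hj
    have h1 : ∏ i : Fin (N+1), PU ((Fin.snoc u' a : Fin (N+1) → U) i) = (∏ i : Fin N, PU (u' i)) * PU a := by
      rw [Fin.prod_univ_castSucc]
      simp
    have h3 : ∏ i : Fin (N+1), chan ((Fin.snoc y' b : Fin (N+1) → Yc) i)
          (enc i (extSeq (Fin.snoc u' a)) (extSeq (Fin.snoc y' b)))
        = (∏ i : Fin N, chan (y' i) (enc i (extSeq u') (extSeq y'))) *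
          chan b (enc N (extSeq (Fin.snoc u' a)) (extSeq y')) := by
      rw [Fin.prod_univ_castSucc]
      congr 1
      · refine Finset.prod_congr rfl fun i _ => ?_
        rw [Fin.snoc_castSucc]
        simp only [Fin.coe_castSucc]
        rw [henclt i]
      · rw [Fin.snoc_last]
        simp only [Fin.val_last]
        rw [hencN]
    rw [h1, h3]; ring
  calc
    ∑ u : Fin (N+1) → U, ∑ y : Fin (N+1) → Yc,
      ((∏ i, PU (u i)) * ∏ i, chan (y i) (enc i (extSeq u) (extSeq y))) * G u y
      = ∑ u' : Fin N → U, ∑ a : U, ∑ y' : Fin N → Yc, ∑ b : Yc,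
        ((∏ i : Fin (N+1), PU ((Fin.snoc u' a : Fin (N+1) → U) i)) *
          ∏ i : Fin (N+1), chan ((Fin.snoc y' b : Fin (N+1) → Yc) i)
            (enc i (extSeq (Fin.snoc u' a)) (extSeq (Fin.snoc y' b)))) *
          G (Fin.snoc u' a) (Fin.snoc y' b) := by
        rw [sum_snoc_pair]
        rw [Fintype.sum_prod_type]
        refine Finset.sum_congr rfl fun u' _ => Finset.sum_congr rfl fun a _ => ?_
        rw [sum_snoc_pair (fun y : Fin (N+1) → Yc =>
          ((∏ i : Fin (N+1), PU ((Fin.snoc u' a : Fin (N+1) → U) i)) *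
            ∏ i : Fin (N+1), chan (y i) (enc i (extSeq (Fin.snoc u' a : Fin (N+1) → U)) (extSeq y))) *
            G (Fin.snoc u' a) y)]
        rw [Fintype.sum_prod_type]
    _ = ∑ u' : Fin N → U, ∑ a : U, ∑ y' : Fin N → Yc, ∑ b : Yc,
        ((∏ i, PU (u' i)) * ∏ i, chan (y' i) (enc i (extSeq u') (extSeq y'))) *
        (PU a * chan b (enc N (extSeq (Fin.snoc u' a)) (extSeq y')) *
          G (Fin.snoc u' a) (Fin.snoc y' b)) := by
        simp only [hpoint]
    _ = _ := by
        refine Finset.sum_congr rfl fun u' _ => ?_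
        rw [Finset.sum_comm]
        refine Finset.sum_congr rfl fun y' _ => ?_
        simp only [Finset.mul_sum]

lemma one_step_norm (hPUs : ∑ u, PU u = 1) (hchs : ∀ x, ∑ y, chan y x = 1) (X : U → Xc) :
    ∑ a, ∑ b, PU a * chan b (X a) = 1 := by
  calc ∑ a, ∑ b, PU a * chan b (X a) = ∑ a, PU a * ∑ b, chan b (X a) := by
        simp [Finset.mul_sum]
    _ = ∑ a, PU a := by simp [hchs]
    _ = 1 := hPUs

lemma normZ (hPUs : ∑ u, PU u = 1) (hchs : ∀ x, ∑ y, chan y x = 1)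
    (enc : ℕ → (ℕ → U) → (ℕ → Yc) → Xc)
    (henc : ∀ (i : ℕ) (u u' : ℕ → U) (y y' : ℕ → Yc),
        (∀ j ≤ i, u j = u' j) → (∀ j < i, y j = y' j) → enc i u y = enc i u' y')
    (N : ℕ) :
    ∑ u : Fin N → U, ∑ y : Fin N → Yc,
      (∏ i, PU (u i)) * ∏ i, chan (y i) (enc i (extSeq u) (extSeq y)) = 1 := by
  induction N with
  | zero => simp
  | succ N ih =>
    have h := sum_split PU chan enc henc N (fun _ _ => 1)
    simp only [mul_one] at h
    rw [h]
    have hin : ∀ (u' : Fin N → U) (y' : Fin N → Yc),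
        (∑ a, ∑ b, PU a * chan b (enc N (extSeq (Fin.snoc u' a)) (extSeq y'))) = 1 := by
      intro u' y'
      exact one_step_norm PU chan hPUs hchs _
    calc ∑ u' : Fin N → U, ∑ y' : Fin N → Yc,
        ((∏ i, PU (u' i)) * ∏ i, chan (y' i) (enc i (extSeq u') (extSeq y'))) *
        ∑ a, ∑ b, PU a * chan b (enc N (extSeq (Fin.snoc u' a)) (extSeq y'))
        = ∑ u' : Fin N → U, ∑ y' : Fin N → Yc,
          ((∏ i, PU (u' i)) * ∏ i, chan (y' i) (enc i (extSeq u') (extSeq y'))) := by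
          refine Finset.sum_congr rfl fun u' _ => Finset.sum_congr rfl fun y' _ => ?_
          rw [hin u' y', mul_one]
      _ = 1 := ih
lemma T_step (hPUs : ∑ u, PU u = 1) (hchs : ∀ x, ∑ y, chan y x = 1)
    (enc : ℕ → (ℕ → U) → (ℕ → Yc) → Xc) (dec : ℕ → (ℕ → Yc) → Uh)
    (henc : ∀ (i : ℕ) (u u' : ℕ → U) (y y' : ℕ → Yc),
        (∀ j ≤ i, u j = u' j) → (∀ j < i, y j = y' j) → enc i u y = enc i u' y')
    (hdec : ∀ (i : ℕ) (y y' : ℕ → Yc), (∀ j ≤ i, y j = y' j) → dec i y = dec i y')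
    (N : ℕ) :
    ∑ u : Fin (N+1) → U, ∑ y : Fin (N+1) → Yc,
      ((∏ i, PU (u i)) * ∏ i, chan (y i) (enc i (extSeq u) (extSeq y))) *
        ∑ i, Λ (u i) (dec i (extSeq y))
    = (∑ u : Fin N → U, ∑ y : Fin N → Yc,
        ((∏ i, PU (u i)) * ∏ i, chan (y i) (enc i (extSeq u) (extSeq y))) *
          ∑ i, Λ (u i) (dec i (extSeq y)))
      + ∑ u' : Fin N → U, ∑ y' : Fin N → Yc,
        ((∏ i, PU (u' i)) * ∏ i, chan (y' i) (enc i (extSeq u') (extSeq y'))) *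
        ∑ a, ∑ b, PU a * chan b (enc N (extSeq (Fin.snoc u' a)) (extSeq y')) *
          Λ a (dec N (extSeq (Fin.snoc y' b))) := by
  rw [sum_split PU chan enc henc N
    (fun u y => ∑ i, Λ (u i) (dec i (extSeq y)))]
  have hG : ∀ (u' : Fin N → U) (a : U) (y' : Fin N → Yc) (b : Yc),
      (∑ i : Fin (N+1), Λ ((Fin.snoc u' a : Fin (N+1) → U) i)
          (dec i (extSeq (Fin.snoc y' b : Fin (N+1) → Yc))))
      = (∑ i : Fin N, Λ (u' i) (dec i (extSeq y')))
        + Λ a (dec N (extSeq (Fin.snoc y' b))) := by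
    intro u' a y' b
    rw [Fin.sum_univ_castSucc]
    congr 1
    · refine Finset.sum_congr rfl fun i _ => ?_
      rw [Fin.snoc_castSucc]
      simp only [Fin.coe_castSucc]
      congr 1
      exact hdec i _ _ fun j hj => extSeq_snoc_of_lt _ _ (lt_of_le_of_lt hj i.isLt)
    · rw [Fin.snoc_last]
      simp only [Fin.val_last]
  have key : ∀ (u' : Fin N → U) (y' : Fin N → Yc),
      (∑ a, ∑ b, PU a * chan b (enc N (extSeq (Fin.snoc u' a)) (extSeq y')) *
        (∑ i : Fin (N+1), Λ ((Fin.snoc u' a : Fin (N+1) → U) i)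
          (dec i (extSeq (Fin.snoc y' b : Fin (N+1) → Yc)))))
      = (∑ i : Fin N, Λ (u' i) (dec i (extSeq y')))
        + ∑ a, ∑ b, PU a * chan b (enc N (extSeq (Fin.snoc u' a)) (extSeq y')) *
          Λ a (dec N (extSeq (Fin.snoc y' b))) := by
    intro u' y'
    have step1 : ∀ (a : U) (b : Yc),
        PU a * chan b (enc N (extSeq (Fin.snoc u' a)) (extSeq y')) *
          (∑ i : Fin (N+1), Λ ((Fin.snoc u' a : Fin (N+1) → U) i)
            (dec i (extSeq (Fin.snoc y' b : Fin (N+1) → Yc))))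
        = PU a * chan b (enc N (extSeq (Fin.snoc u' a)) (extSeq y')) *
            (∑ i : Fin N, Λ (u' i) (dec i (extSeq y')))
          + PU a * chan b (enc N (extSeq (Fin.snoc u' a)) (extSeq y')) *
            Λ a (dec N (extSeq (Fin.snoc y' b))) := by
      intro a b
      rw [hG u' a y' b, mul_add]
    calc (∑ a, ∑ b, PU a * chan b (enc N (extSeq (Fin.snoc u' a)) (extSeq y')) *
        (∑ i : Fin (N+1), Λ ((Fin.snoc u' a : Fin (N+1) → U) i)
          (dec i (extSeq (Fin.snoc y' b : Fin (N+1) → Yc)))))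
        = (∑ a, ∑ b, PU a * chan b (enc N (extSeq (Fin.snoc u' a)) (extSeq y')) *
            (∑ i : Fin N, Λ (u' i) (dec i (extSeq y'))))
          + ∑ a, ∑ b, PU a * chan b (enc N (extSeq (Fin.snoc u' a)) (extSeq y')) *
            Λ a (dec N (extSeq (Fin.snoc y' b))) := by
          simp only [step1, Finset.sum_add_distrib]
      _ = _ := by
          congr 1
          calc (∑ a, ∑ b, PU a * chan b (enc N (extSeq (Fin.snoc u' a)) (extSeq y')) *
                (∑ i : Fin N, Λ (u' i) (dec i (extSeq y'))))
              = (∑ a, ∑ b, PU a * chan b (enc N (extSeq (Fin.snoc u' a)) (extSeq y'))) *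
                (∑ i : Fin N, Λ (u' i) (dec i (extSeq y'))) := by
                rw [Finset.sum_mul]
                exact Finset.sum_congr rfl fun a _ => (Finset.sum_mul _ _ _).symm
            _ = _ := by
                rw [one_step_norm PU chan hPUs hchs
                  (fun a => enc N (extSeq (Fin.snoc u' a)) (extSeq y')), one_mul]
  calc ∑ u' : Fin N → U, ∑ y' : Fin N → Yc,
      ((∏ i, PU (u' i)) * ∏ i, chan (y' i) (enc i (extSeq u') (extSeq y'))) *
      ∑ a, ∑ b, PU a * chan b (enc N (extSeq (Fin.snoc u' a)) (extSeq y')) *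
        (∑ i : Fin (N+1), Λ ((Fin.snoc u' a : Fin (N+1) → U) i)
          (dec i (extSeq (Fin.snoc y' b : Fin (N+1) → Yc))))
      = ∑ u' : Fin N → U, ∑ y' : Fin N → Yc,
        (((∏ i, PU (u' i)) * ∏ i, chan (y' i) (enc i (extSeq u') (extSeq y'))) *
          (∑ i : Fin N, Λ (u' i) (dec i (extSeq y')))
        + ((∏ i, PU (u' i)) * ∏ i, chan (y' i) (enc i (extSeq u') (extSeq y'))) *
          ∑ a, ∑ b, PU a * chan b (enc N (extSeq (Fin.snoc u' a)) (extSeq y')) *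
            Λ a (dec N (extSeq (Fin.snoc y' b)))) := by
        refine Finset.sum_congr rfl fun u' _ => Finset.sum_congr rfl fun y' _ => ?_
        rw [key u' y', mul_add]
    _ = _ := by
        simp only [Finset.sum_add_distrib]
lemma T_lb (hPU0 : ∀ u, 0 ≤ PU u) (hPUs : ∑ u, PU u = 1)
    (hch0 : ∀ y x, 0 ≤ chan y x) (hchs : ∀ x, ∑ y, chan y x = 1)
    (enc : ℕ → (ℕ → U) → (ℕ → Yc) → Xc) (dec : ℕ → (ℕ → Yc) → Uh)
    (henc : ∀ (i : ℕ) (u u' : ℕ → U) (y y' : ℕ → Yc),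
        (∀ j ≤ i, u j = u' j) → (∀ j < i, y j = y' j) → enc i u y = enc i u' y')
    (hdec : ∀ (i : ℕ) (y y' : ℕ → Yc), (∀ j ≤ i, y j = y' j) → dec i y = dec i y')
    (N : ℕ) :
    (N : ℝ) * (Finset.univ.inf' Finset.univ_nonempty
        (fun c : (U → Xc) × (Yc → Uh) =>
          ∑ u, ∑ y, PU u * chan y (c.1 u) * Λ u (c.2 y)))
    ≤ ∑ u : Fin N → U, ∑ y : Fin N → Yc,
      ((∏ i, PU (u i)) * ∏ i, chan (y i) (enc i (extSeq u) (extSeq y))) *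
        ∑ i, Λ (u i) (dec i (extSeq y)) := by
  set D := Finset.univ.inf' Finset.univ_nonempty
      (fun c : (U → Xc) × (Yc → Uh) =>
        ∑ u, ∑ y, PU u * chan y (c.1 u) * Λ u (c.2 y)) with hD
  induction N with
  | zero => simp
  | succ N ih =>
    rw [T_step PU chan Λ hPUs hchs enc dec henc hdec N]
    have hI : ∀ (u' : Fin N → U) (y' : Fin N → Yc),
        D ≤ ∑ a, ∑ b, PU a * chan b (enc N (extSeq (Fin.snoc u' a)) (extSeq y')) *
          Λ a (dec N (extSeq (Fin.snoc y' b))) := by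
      intro u' y'
      exact Finset.inf'_le _ (Finset.mem_univ
        ((fun a => enc N (extSeq (Fin.snoc u' a)) (extSeq y')),
         (fun b => dec N (extSeq (Fin.snoc y' b)))))
    have hA0 : ∀ (u' : Fin N → U) (y' : Fin N → Yc),
        0 ≤ (∏ i, PU (u' i)) * ∏ i, chan (y' i) (enc i (extSeq u') (extSeq y')) :=
      fun u' y' => mul_nonneg (Finset.prod_nonneg fun i _ => hPU0 _)
        (Finset.prod_nonneg fun i _ => hch0 _ _)
    have h2 : D ≤ ∑ u' : Fin N → U, ∑ y' : Fin N → Yc,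
        ((∏ i, PU (u' i)) * ∏ i, chan (y' i) (enc i (extSeq u') (extSeq y'))) *
        ∑ a, ∑ b, PU a * chan b (enc N (extSeq (Fin.snoc u' a)) (extSeq y')) *
          Λ a (dec N (extSeq (Fin.snoc y' b))) := by
      calc D = (∑ u' : Fin N → U, ∑ y' : Fin N → Yc,
            (∏ i, PU (u' i)) * ∏ i, chan (y' i) (enc i (extSeq u') (extSeq y'))) * D := by
            rw [normZ PU chan hPUs hchs enc henc N, one_mul]
        _ ≤ _ := by
            rw [Finset.sum_mul]
            refine Finset.sum_le_sum fun u' _ => ?_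
            rw [Finset.sum_mul]
            refine Finset.sum_le_sum fun y' _ => ?_
            exact mul_le_mul_of_nonneg_left (hI u' y') (hA0 u' y')
    push_cast
    linarith [ih]

lemma T_ub (hPU0 : ∀ u, 0 ≤ PU u) (hPUs : ∑ u, PU u = 1)
    (hch0 : ∀ y x, 0 ≤ chan y x) (hchs : ∀ x, ∑ y, chan y x = 1)
    (Λmax : ℝ) (hΛmax : ∀ u v, Λ u v ≤ Λmax)
    (enc : ℕ → (ℕ → U) → (ℕ → Yc) → Xc) (dec : ℕ → (ℕ → Yc) → Uh)
    (henc : ∀ (i : ℕ) (u u' : ℕ → U) (y y' : ℕ → Yc),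
        (∀ j ≤ i, u j = u' j) → (∀ j < i, y j = y' j) → enc i u y = enc i u' y')
    (N : ℕ) :
    ∑ u : Fin N → U, ∑ y : Fin N → Yc,
      ((∏ i, PU (u i)) * ∏ i, chan (y i) (enc i (extSeq u) (extSeq y))) *
        ∑ i, Λ (u i) (dec i (extSeq y)) ≤ (N : ℝ) * Λmax := by
  have hS : ∀ (u : Fin N → U) (y : Fin N → Yc),
      (∑ i, Λ (u i) (dec i (extSeq y))) ≤ (N : ℝ) * Λmax := by
    intro u y
    calc (∑ i : Fin N, Λ (u i) (dec i (extSeq y))) ≤ ∑ _i : Fin N, Λmax :=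
          Finset.sum_le_sum fun i _ => hΛmax _ _
      _ = (N : ℝ) * Λmax := by
          rw [Finset.sum_const, Finset.card_univ, Fintype.card_fin, nsmul_eq_mul]
  have hA0 : ∀ (u : Fin N → U) (y : Fin N → Yc),
      0 ≤ (∏ i, PU (u i)) * ∏ i, chan (y i) (enc i (extSeq u) (extSeq y)) :=
    fun u y => mul_nonneg (Finset.prod_nonneg fun i _ => hPU0 _)
      (Finset.prod_nonneg fun i _ => hch0 _ _)
  calc ∑ u : Fin N → U, ∑ y : Fin N → Yc,
      ((∏ i, PU (u i)) * ∏ i, chan (y i) (enc i (extSeq u) (extSeq y))) *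
        ∑ i, Λ (u i) (dec i (extSeq y))
      ≤ ∑ u : Fin N → U, ∑ y : Fin N → Yc,
        ((∏ i, PU (u i)) * ∏ i, chan (y i) (enc i (extSeq u) (extSeq y))) *
          ((N : ℝ) * Λmax) :=
        Finset.sum_le_sum fun u _ => Finset.sum_le_sum fun y _ =>
          mul_le_mul_of_nonneg_left (hS u y) (hA0 u y)
    _ = (∑ u : Fin N → U, ∑ y : Fin N → Yc,
        (∏ i, PU (u i)) * ∏ i, chan (y i) (enc i (extSeq u) (extSeq y))) * ((N : ℝ) * Λmax) := by
        rw [Finset.sum_mul]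
        exact Finset.sum_congr rfl fun u _ => (Finset.sum_mul _ _ _).symm
    _ = (N : ℝ) * Λmax := by rw [normZ PU chan hPUs hchs enc henc N, one_mul]

lemma T_exact (hPUs : ∑ u, PU u = 1) (hchs : ∀ x, ∑ y, chan y x = 1)
    (c0 : (U → Xc) × (Yc → Uh)) (N : ℕ) :
    ∑ u : Fin N → U, ∑ y : Fin N → Yc,
      ((∏ i, PU (u i)) * ∏ i, chan (y i)
        ((fun (i : ℕ) (u : ℕ → U) (_ : ℕ → Yc) => c0.1 (u i)) i (extSeq u) (extSeq y))) *
        ∑ i, Λ (u i) ((fun (i : ℕ) (y : ℕ → Yc) => c0.2 (y i)) i (extSeq y))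
    = (N : ℝ) * ∑ a, ∑ b, PU a * chan b (c0.1 a) * Λ a (c0.2 b) := by
  have henc : ∀ (i : ℕ) (u u' : ℕ → U) (y y' : ℕ → Yc),
      (∀ j ≤ i, u j = u' j) → (∀ j < i, y j = y' j) →
      (fun (i : ℕ) (u : ℕ → U) (_ : ℕ → Yc) => c0.1 (u i)) i u y
        = (fun (i : ℕ) (u : ℕ → U) (_ : ℕ → Yc) => c0.1 (u i)) i u' y' := by
    intro i u u' y y' hu _
    simp only []
    rw [hu i le_rfl]
  have hdec : ∀ (i : ℕ) (y y' : ℕ → Yc), (∀ j ≤ i, y j = y' j) →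
      (fun (i : ℕ) (y : ℕ → Yc) => c0.2 (y i)) i y
        = (fun (i : ℕ) (y : ℕ → Yc) => c0.2 (y i)) i y' := by
    intro i y y' hy
    simp only []
    rw [hy i le_rfl]
  induction N with
  | zero => simp
  | succ N ih =>
    rw [T_step PU chan Λ hPUs hchs _ _ henc hdec N, ih]
    have hI : ∀ (u' : Fin N → U) (y' : Fin N → Yc),
        (∑ a, ∑ b, PU a * chan b (c0.1 (extSeq (Fin.snoc u' a) N)) *
          Λ a (c0.2 (extSeq (Fin.snoc y' b) N)))
        = ∑ a, ∑ b, PU a * chan b (c0.1 a) * Λ a (c0.2 b) := by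
      intro u' y'
      refine Finset.sum_congr rfl fun a _ => Finset.sum_congr rfl fun b _ => ?_
      rw [extSeq_snoc_last, extSeq_snoc_last]
    have h2 : ∑ u' : Fin N → U, ∑ y' : Fin N → Yc,
        ((∏ i, PU (u' i)) * ∏ i, chan (y' i) (c0.1 (extSeq u' i))) *
        ∑ a, ∑ b, PU a * chan b (c0.1 (extSeq (Fin.snoc u' a) N)) *
          Λ a (c0.2 (extSeq (Fin.snoc y' b) N))
        = ∑ a, ∑ b, PU a * chan b (c0.1 a) * Λ a (c0.2 b) := by
      calc ∑ u' : Fin N → U, ∑ y' : Fin N → Yc,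
          ((∏ i, PU (u' i)) * ∏ i, chan (y' i) (c0.1 (extSeq u' i))) *
          ∑ a, ∑ b, PU a * chan b (c0.1 (extSeq (Fin.snoc u' a) N)) *
            Λ a (c0.2 (extSeq (Fin.snoc y' b) N))
          = ∑ u' : Fin N → U, ∑ y' : Fin N → Yc,
            ((∏ i, PU (u' i)) * ∏ i, chan (y' i) (c0.1 (extSeq u' i))) *
            ∑ a, ∑ b, PU a * chan b (c0.1 a) * Λ a (c0.2 b) := by
            refine Finset.sum_congr rfl fun u' _ => Finset.sum_congr rfl fun y' _ => ?_
            rw [hI u' y']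
        _ = (∑ u' : Fin N → U, ∑ y' : Fin N → Yc,
            (∏ i, PU (u' i)) * ∏ i, chan (y' i) (c0.1 (extSeq u' i))) *
            ∑ a, ∑ b, PU a * chan b (c0.1 a) * Λ a (c0.2 b) := by
            rw [Finset.sum_mul]
            exact Finset.sum_congr rfl fun u' _ => (Finset.sum_mul _ _ _).symm
        _ = _ := by
            rw [normZ PU chan hPUs hchs _ henc N, one_mul]
    rw [h2]
    push_cast
    ring
end main

/-- for a memoryless source and memoryless channel with zero lookahead
(`d = 0`), the infimum over all causal encoder sequences
`f_{e,i} : 𝒰^i × 𝒴^{i−1} → 𝒳` and causal decoder sequences `f_{d,i} : 𝒴^i → 𝒰̂`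
(causality expressed as dependence only on the corresponding prefixes) of the limsup
expected average distortion equals the best single-letter (symbol-by-symbol)
distortion `D_symbol = min_{X : 𝒰 → 𝒳, Û : 𝒴 → 𝒰̂} E[Λ(U, Û(Y))]`. -/
theorem stmt4 {U Xc Yc Uh : Type*}
    [Fintype U] [Nonempty U] [DecidableEq U]
    [Fintype Xc] [Nonempty Xc]
    [Fintype Yc] [Nonempty Yc] [DecidableEq Yc]
    [Fintype Uh] [Nonempty Uh]
    (PU : U → ℝ) (hPU0 : ∀ u, 0 ≤ PU u) (hPUs : ∑ u, PU u = 1)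
    (chan : Yc → Xc → ℝ) (hch0 : ∀ y x, 0 ≤ chan y x) (hchs : ∀ x, ∑ y, chan y x = 1)
    (Λ : U → Uh → ℝ) (Λmax : ℝ) (hΛ0 : ∀ u v, 0 ≤ Λ u v) (hΛmax : ∀ u v, Λ u v ≤ Λmax) :
    sInf {r : ℝ | ∃ (enc : ℕ → (ℕ → U) → (ℕ → Yc) → Xc) (dec : ℕ → (ℕ → Yc) → Uh),
        (∀ (i : ℕ) (u u' : ℕ → U) (y y' : ℕ → Yc),
            (∀ j ≤ i, u j = u' j) → (∀ j < i, y j = y' j) → enc i u y = enc i u' y') ∧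
        (∀ (i : ℕ) (y y' : ℕ → Yc), (∀ j ≤ i, y j = y' j) → dec i y = dec i y') ∧
        r = Filter.limsup (fun N : ℕ =>
          (∑ u : Fin N → U, ∑ y : Fin N → Yc,
            ((∏ i, PU (u i)) * ∏ i, chan (y i) (enc i (extSeq u) (extSeq y))) *
              ∑ i, Λ (u i) (dec i (extSeq y))) / (N : ℝ)) Filter.atTop} =
      Finset.univ.inf' Finset.univ_nonempty
        (fun c : (U → Xc) × (Yc → Uh) =>
          ∑ u, ∑ y, PU u * chan y (c.1 u) * Λ u (c.2 y)) := by
  set D := Finset.univ.inf' Finset.univ_nonempty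
      (fun c : (U → Xc) × (Yc → Uh) =>
        ∑ u, ∑ y, PU u * chan y (c.1 u) * Λ u (c.2 y)) with hDdef
  have hΛmax0 : (0 : ℝ) ≤ Λmax :=
    le_trans (hΛ0 (Classical.arbitrary U) (Classical.arbitrary Uh)) (hΛmax _ _)
  -- lower bound: every achievable r is ≥ D
  have hlow : ∀ r ∈ {r : ℝ | ∃ (enc : ℕ → (ℕ → U) → (ℕ → Yc) → Xc) (dec : ℕ → (ℕ → Yc) → Uh),
        (∀ (i : ℕ) (u u' : ℕ → U) (y y' : ℕ → Yc),
            (∀ j ≤ i, u j = u' j) → (∀ j < i, y j = y' j) → enc i u y = enc i u' y') ∧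
        (∀ (i : ℕ) (y y' : ℕ → Yc), (∀ j ≤ i, y j = y' j) → dec i y = dec i y') ∧
        r = Filter.limsup (fun N : ℕ =>
          (∑ u : Fin N → U, ∑ y : Fin N → Yc,
            ((∏ i, PU (u i)) * ∏ i, chan (y i) (enc i (extSeq u) (extSeq y))) *
              ∑ i, Λ (u i) (dec i (extSeq y))) / (N : ℝ)) Filter.atTop}, D ≤ r := by
    rintro r ⟨enc, dec, henc, hdec, rfl⟩
    apply Filter.le_limsup_of_frequently_le
    · refine (Filter.eventually_atTop.2 ⟨1, fun N hN => ?_⟩).frequently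
      have hNpos : (0 : ℝ) < (N : ℝ) := by exact_mod_cast hN
      rw [le_div_iff₀ hNpos]
      calc D * (N : ℝ) = (N : ℝ) * D := mul_comm _ _
        _ ≤ _ := T_lb PU chan Λ hPU0 hPUs hch0 hchs enc dec henc hdec N
    · refine Filter.isBoundedUnder_of_eventually_le (a := Λmax)
        (Filter.eventually_atTop.2 ⟨1, fun N hN => ?_⟩)
      have hNpos : (0 : ℝ) < (N : ℝ) := by exact_mod_cast hN
      rw [div_le_iff₀ hNpos]
      calc ∑ u : Fin N → U, ∑ y : Fin N → Yc,
          ((∏ i, PU (u i)) * ∏ i, chan (y i) (enc i (extSeq u) (extSeq y))) *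
            ∑ i, Λ (u i) (dec i (extSeq y))
          ≤ (N : ℝ) * Λmax := T_ub PU chan Λ hPU0 hPUs hch0 hchs Λmax hΛmax enc dec henc N
        _ = Λmax * (N : ℝ) := mul_comm _ _
  -- membership: D itself is achieved by the symbol-by-symbol scheme
  obtain ⟨c0, -, hc0⟩ := Finset.exists_mem_eq_inf' (Finset.univ_nonempty
      (α := (U → Xc) × (Yc → Uh)))
    (fun c : (U → Xc) × (Yc → Uh) => ∑ u, ∑ y, PU u * chan y (c.1 u) * Λ u (c.2 y))
  have hmem : D ∈ {r : ℝ | ∃ (enc : ℕ → (ℕ → U) → (ℕ → Yc) → Xc) (dec : ℕ → (ℕ → Yc) → Uh),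
        (∀ (i : ℕ) (u u' : ℕ → U) (y y' : ℕ → Yc),
            (∀ j ≤ i, u j = u' j) → (∀ j < i, y j = y' j) → enc i u y = enc i u' y') ∧
        (∀ (i : ℕ) (y y' : ℕ → Yc), (∀ j ≤ i, y j = y' j) → dec i y = dec i y') ∧
        r = Filter.limsup (fun N : ℕ =>
          (∑ u : Fin N → U, ∑ y : Fin N → Yc,
            ((∏ i, PU (u i)) * ∏ i, chan (y i) (enc i (extSeq u) (extSeq y))) *
              ∑ i, Λ (u i) (dec i (extSeq y))) / (N : ℝ)) Filter.atTop} := by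
    refine ⟨fun (i : ℕ) (u : ℕ → U) (_ : ℕ → Yc) => c0.1 (u i),
      fun (i : ℕ) (y : ℕ → Yc) => c0.2 (y i), ?_, ?_, ?_⟩
    · intro i u u' y y' hu _
      simp only []
      rw [hu i le_rfl]
    · intro i y y' hy
      simp only []
      rw [hy i le_rfl]
    · have heq : ∀ᶠ N in (Filter.atTop : Filter ℕ),
          (∑ u : Fin N → U, ∑ y : Fin N → Yc,
            ((∏ i, PU (u i)) * ∏ i, chan (y i)
              ((fun (i : ℕ) (u : ℕ → U) (_ : ℕ → Yc) => c0.1 (u i)) i (extSeq u) (extSeq y))) *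
              ∑ i, Λ (u i) ((fun (i : ℕ) (y : ℕ → Yc) => c0.2 (y i)) i (extSeq y))) / (N : ℝ)
          = D := by
        refine Filter.eventually_atTop.2 ⟨1, fun N hN => ?_⟩
        have hNne : ((N : ℝ)) ≠ 0 := by positivity
        rw [T_exact PU chan Λ hPUs hchs c0 N, mul_comm, mul_div_assoc, div_self hNne,
          mul_one, hDdef, hc0]
      rw [Filter.limsup_congr heq, Filter.limsup_const]
  exact le_antisymm (csInf_le ⟨D, hlow⟩ hmem) (le_csInf ⟨D, hmem⟩ hlow)
end

section
/- (Verification theorem / ACOE, finite case.) Let 𝒮 and 𝒜 be finite nonempty sets, g : 𝒮 × 𝒜 → ℝ a bounded reward, and Q(·|s,a) a transition pmf on 𝒮 for each (s,a). Suppose λ ∈ ℝ and h : 𝒮 → ℝ satisfy λ + h(s) = max_{a∈𝒜} [ g(s,a) + Σ_{s'} Q(s'|s,a) h(s') ] for all s ∈ 𝒮. Then for every initial state s₀ and every (possibly history-dependent) policy choosing actions a_t as a function of the history, liminf_{N→∞} (1/N) E[Σ_{t=1}^N g(S_{t−1}, A_t)] ≤ λ. -/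
/-- Expected total reward over `N` steps of a controlled Markov chain with transition
pmf `Q`, one-stage reward `g`, and a history-dependent (deterministic) policy `π`
mapping the history of visited states `(s₀, …, s_{t−1})` to the action `a_t`.
The first `List S` argument is the history of states strictly before the current one. -/
noncomputable def expTotalReward {S A : Type*} [Fintype S]
    (Q : S → A → S → ℝ) (g : S → A → ℝ) (π : List S → A) :
    ℕ → List S → S → ℝ
  | 0, _, _ => 0
  | N + 1, hist, s =>
      g s (π (hist ++ [s])) +
        ∑ s', Q s (π (hist ++ [s])) s' * expTotalReward Q g π N (hist ++ [s]) s'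

theorem expTotalReward_le {S A : Type*} [Fintype S] [Nonempty S] [Fintype A] [Nonempty A]
    (Q : S → A → S → ℝ) (hQ0 : ∀ s a s', 0 ≤ Q s a s') (hQs : ∀ s a, ∑ s', Q s a s' = 1)
    (g : S → A → ℝ) (lam : ℝ) (h : S → ℝ)
    (hACOE : ∀ s, lam + h s =
      Finset.univ.sup' Finset.univ_nonempty (fun a => g s a + ∑ s', Q s a s' * h s'))
    (π : List S → A) :
    ∀ (N : ℕ) (hist : List S) (s : S),
      expTotalReward Q g π N hist s ≤ N * lam + h s - Finset.univ.inf' Finset.univ_nonempty h := by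
  set m := Finset.univ.inf' Finset.univ_nonempty h with hm
  have hmle : ∀ s : S, m ≤ h s := fun s =>
    Finset.inf'_le _ (Finset.mem_univ s)
  intro N
  induction N with
  | zero =>
    intro hist s
    simp [expTotalReward]
    linarith [hmle s]
  | succ N ih =>
    intro hist s
    rw [expTotalReward]
    set a := π (hist ++ [s]) with ha
    have h1 : ∑ s', Q s a s' * expTotalReward Q g π N (hist ++ [s]) s' ≤
        ∑ s', Q s a s' * (N * lam + h s' - m) := by
      apply Finset.sum_le_sum
      intro s' _
      exact mul_le_mul_of_nonneg_left (ih _ s') (hQ0 s a s')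
    have h2 : ∑ s', Q s a s' * (N * lam + h s' - m) =
        (N * lam - m) + ∑ s', Q s a s' * h s' := by
      have : ∀ s', Q s a s' * (N * lam + h s' - m) =
          Q s a s' * (N * lam - m) + Q s a s' * h s' := by
        intro s'; ring
      rw [Finset.sum_congr rfl (fun s' _ => this s'), Finset.sum_add_distrib,
        ← Finset.sum_mul, hQs s a, one_mul]
    have h3 : g s a + ∑ s', Q s a s' * h s' ≤ lam + h s := by
      rw [hACOE s]
      exact Finset.le_sup' (fun a => g s a + ∑ s', Q s a s' * h s') (Finset.mem_univ a)
    push_cast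
    linarith

/-- verification theorem / ACOE, finite case: if `λ` and `h` solve the
average cost optimality equation, then no policy (however history-dependent) can have
average reward exceeding `λ`, from any initial state. -/
theorem stmt7 {S A : Type*} [Fintype S] [Nonempty S] [Fintype A] [Nonempty A]
    (Q : S → A → S → ℝ) (hQ0 : ∀ s a s', 0 ≤ Q s a s') (hQs : ∀ s a, ∑ s', Q s a s' = 1)
    (g : S → A → ℝ) (lam : ℝ) (h : S → ℝ)
    (hACOE : ∀ s, lam + h s =
      Finset.univ.sup' Finset.univ_nonempty (fun a => g s a + ∑ s', Q s a s' * h s')) :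
    ∀ (π : List S → A) (s₀ : S),
      Filter.liminf (fun N : ℕ => expTotalReward Q g π N [] s₀ / N) Filter.atTop ≤ lam := by
  intro π s₀
  set m := Finset.univ.inf' Finset.univ_nonempty h with hm
  set C := h s₀ - m with hC
  have key := expTotalReward_le Q hQ0 hQs g lam h hACOE π
  have hev : ∀ᶠ N : ℕ in Filter.atTop,
      expTotalReward Q g π N [] s₀ / N ≤ lam + C / N := by
    filter_upwards [Filter.eventually_ge_atTop 1] with N hN
    have hN' : (0 : ℝ) < N := by positivity
    rw [div_le_iff₀ hN']
    have := key N [] s₀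
    rw [add_mul, div_mul_cancel₀ _ hN'.ne']
    nlinarith
  have htend : Filter.Tendsto (fun N : ℕ => lam + C / N) Filter.atTop (nhds lam) := by
    have : Filter.Tendsto (fun N : ℕ => C / N) Filter.atTop (nhds 0) :=
      tendsto_const_div_atTop_nhds_zero_nat C
    simpa using Filter.Tendsto.const_add lam this
  have hlow : ∀ N : ℕ, (N : ℝ) * Finset.univ.inf' Finset.univ_nonempty
      (fun p : S × A => g p.1 p.2) ≤ expTotalReward Q g π N [] s₀ := by
    set mg := Finset.univ.inf' Finset.univ_nonempty (fun p : S × A => g p.1 p.2) with hmg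
    have hmgle : ∀ (s : S) (a : A), mg ≤ g s a := fun s a =>
      Finset.inf'_le _ (Finset.mem_univ (s, a))
    have main : ∀ (N : ℕ) (hist : List S) (s : S),
        (N : ℝ) * mg ≤ expTotalReward Q g π N hist s := by
      intro N
      induction N with
      | zero => intro hist s; simp [expTotalReward]
      | succ N ih =>
        intro hist s
        rw [expTotalReward]
        set a := π (hist ++ [s]) with ha
        have h1 : ∑ s', Q s a s' * ((N : ℝ) * mg) ≤
            ∑ s', Q s a s' * expTotalReward Q g π N (hist ++ [s]) s' := by
          apply Finset.sum_le_sum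
          intro s' _
          exact mul_le_mul_of_nonneg_left (ih _ s') (hQ0 s a s')
        have h2 : ∑ s', Q s a s' * ((N : ℝ) * mg) = (N : ℝ) * mg := by
          rw [← Finset.sum_mul, hQs s a, one_mul]
        have := hmgle s a
        push_cast
        linarith
    intro N; exact main N [] s₀
  have hbddf : Filter.IsBoundedUnder (· ≥ ·) Filter.atTop
      (fun N : ℕ => expTotalReward Q g π N [] s₀ / N) := by
    refine ⟨min 0 (Finset.univ.inf' Finset.univ_nonempty (fun p : S × A => g p.1 p.2)),
      Filter.eventually_map.2 ?_⟩
    filter_upwards with N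
    rcases Nat.eq_zero_or_pos N with hN | hN
    · simp [hN, expTotalReward]
    · have hN' : (0 : ℝ) < N := by positivity
      have := hlow N
      have : Finset.univ.inf' Finset.univ_nonempty (fun p : S × A => g p.1 p.2) ≤
          expTotalReward Q g π N [] s₀ / N := by
        rw [le_div_iff₀ hN']; linarith
      exact le_trans (min_le_right _ _) this
  have hcobg : Filter.IsCoboundedUnder (· ≥ ·) Filter.atTop
      (fun N : ℕ => lam + C / N) := by
    apply Filter.isCoboundedUnder_ge_of_le _ (x := lam + |C|)
    intro N
    have h1 : C / (N : ℝ) ≤ |C| := by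
      rcases Nat.eq_zero_or_pos N with hN | hN
      · simp [hN, abs_nonneg]
      · have hN' : (0 : ℝ) < N := by positivity
        rw [div_le_iff₀ hN']
        have h2 : |C| ≤ |C| * N := le_mul_of_one_le_right (abs_nonneg C) (by exact_mod_cast hN)
        have := le_abs_self C
        linarith
    linarith
  calc Filter.liminf (fun N : ℕ => expTotalReward Q g π N [] s₀ / N) Filter.atTop
      ≤ Filter.liminf (fun N : ℕ => lam + C / N) Filter.atTop :=
        Filter.liminf_le_liminf hev hbddf hcobg
    _ = lam := htend.liminf_eq
end

section
/- (Verification theorem, achievability part.) Under the setting of the finite-state ACOE, if μ : 𝒮 → 𝒜 attains the maximum in λ + h(s) = max_a [g(s,a) + Σ_{s'} Q(s'|s,a) h(s')] for every s, then the stationary policy a_t = μ(S_{t−1}) achieves average reward exactly λ from any initial state: lim_{N→∞} (1/N) E[Σ_{t=1}^N g(S_{t−1}, μ(S_{t−1}))] = λ. -/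
/-- Expected total reward over `N` steps under the stationary policy `μ` in a controlled
Markov chain with transition pmf `Q` and one-stage reward `g`. -/
noncomputable def expTotalRewardStat {S A : Type*} [Fintype S]
    (Q : S → A → S → ℝ) (g : S → A → ℝ) (μ : S → A) : ℕ → S → ℝ
  | 0, _ => 0
  | N + 1, s =>
      g s (μ s) + ∑ s', Q s (μ s) s' * expTotalRewardStat Q g μ N s'

/-- verification theorem, achievability part: if `μ` attains the maximum
in the ACOE `λ + h(s) = max_a [g(s,a) + Σ_{s'} Q(s'|s,a) h(s')]` for every state, then
the stationary policy `a_t = μ(S_{t−1})` achieves average reward exactly `λ` from any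
initial state. -/
theorem stmt8 {S A : Type*} [Fintype S] [Nonempty S] [Fintype A] [Nonempty A]
    (Q : S → A → S → ℝ) (hQ0 : ∀ s a s', 0 ≤ Q s a s') (hQs : ∀ s a, ∑ s', Q s a s' = 1)
    (g : S → A → ℝ) (lam : ℝ) (h : S → ℝ) (μ : S → A)
    (hACOE : ∀ s, lam + h s =
      Finset.univ.sup' Finset.univ_nonempty (fun a => g s a + ∑ s', Q s a s' * h s'))
    (hμ : ∀ s, g s (μ s) + ∑ s', Q s (μ s) s' * h s' = lam + h s) :
    ∀ s₀ : S,
      Filter.Tendsto (fun N : ℕ => expTotalRewardStat Q g μ N s₀ / N)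
        Filter.atTop (nhds lam) := by
  obtain ⟨C, hC⟩ : ∃ C, ∀ s : S, |h s| ≤ C :=
    ⟨Finset.univ.sup' Finset.univ_nonempty (fun s => |h s|),
      fun s => Finset.le_sup' (fun s => |h s|) (Finset.mem_univ s)⟩
  have key : ∀ N : ℕ, ∀ s : S,
      |expTotalRewardStat Q g μ N s - ((N : ℝ) * lam + h s)| ≤ C := by
    intro N
    induction N with
    | zero =>
      intro s
      simpa [expTotalRewardStat] using hC s
    | succ N ih =>
      intro s
      have hrw : expTotalRewardStat Q g μ (N + 1) s - (((N : ℝ) + 1) * lam + h s)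
          = ∑ s', Q s (μ s) s' *
              (expTotalRewardStat Q g μ N s' - ((N : ℝ) * lam + h s')) := by
        have h1 := hμ s
        have h2 := hQs s (μ s)
        simp only [expTotalRewardStat, mul_sub, Finset.sum_sub_distrib, mul_add,
          Finset.sum_add_distrib, ← Finset.sum_mul, h2]
        linarith
      rw [Nat.cast_succ, hrw]
      calc |∑ s', Q s (μ s) s' *
              (expTotalRewardStat Q g μ N s' - ((N : ℝ) * lam + h s'))|
          ≤ ∑ s', |Q s (μ s) s' *
              (expTotalRewardStat Q g μ N s' - ((N : ℝ) * lam + h s'))| :=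
            Finset.abs_sum_le_sum_abs _ _
        _ ≤ ∑ s', Q s (μ s) s' * C := by
            apply Finset.sum_le_sum
            intro s' _
            rw [abs_mul, abs_of_nonneg (hQ0 s (μ s) s')]
            exact mul_le_mul_of_nonneg_left (ih s') (hQ0 s (μ s) s')
        _ = C := by rw [← Finset.sum_mul, hQs, one_mul]
  intro s₀
  rw [← tendsto_sub_nhds_zero_iff]
  apply squeeze_zero_norm' (a := fun N : ℕ => (C + |h s₀|) / N)
  · filter_upwards [Filter.eventually_ge_atTop 1] with N hN
    have hN' : (0 : ℝ) < N := by exact_mod_cast hN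
    have : expTotalRewardStat Q g μ N s₀ / N - lam
        = (expTotalRewardStat Q g μ N s₀ - (N : ℝ) * lam) / N := by
      field_simp
    rw [Real.norm_eq_abs, this, abs_div, abs_of_pos hN']
    gcongr
    calc |expTotalRewardStat Q g μ N s₀ - (N : ℝ) * lam|
        ≤ |expTotalRewardStat Q g μ N s₀ - ((N : ℝ) * lam + h s₀)| + |h s₀| := by
          have := abs_sub_abs_le_abs_sub (expTotalRewardStat Q g μ N s₀ - (N : ℝ) * lam)
            (h s₀)
          calc |expTotalRewardStat Q g μ N s₀ - (N : ℝ) * lam|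
              = |(expTotalRewardStat Q g μ N s₀ - ((N : ℝ) * lam + h s₀)) + h s₀| := by
                ring_nf
            _ ≤ _ := abs_add_le _ _
      _ ≤ C + |h s₀| := by linarith [key N s₀]
  · exact tendsto_const_div_atTop_nhds_zero_nat _
end
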